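/- Let G be a graph with vertex partition V(G) = X ∪ Y ∪ Z where X induces K_{p−1}, Y is an independent set with all edges between X and Y present and |Y| ≥ 2p, and suppose there is a path P in G[Z ∪ X] whose endpoints lie in X with |V(P) ∩ Z| > |V(P) ∩ X| = t ≥ 2. Then G contains a cycle of length at least 2p. -/

import Mathlib

/-- Auxiliary: build an alternating path `b, y₀, x₀, y₁, x₁, …, y_k, a` through
fresh vertices `ys ⊆ Y` and `xs`. -/
lemma buildWalk_aux {V : Type*} (G : SimpleGraph V) (Y : Set V) (a : V) (haY : a ∉ Y) :
    ∀ (xs : List V) (ys : List V) (b : V), ys.length = xs.length + 1 →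
      xs.Nodup → ys.Nodup → (∀ y ∈ ys, y ∈ Y) → (∀ x ∈ xs, x ∉ Y) →
      b ∉ Y → a ∉ xs → b ∉ xs → b ≠ a →
      (∀ x, (x = a ∨ x = b ∨ x ∈ xs) → ∀ y ∈ ys, G.Adj x y) →
      ∃ Q : G.Walk b a, Q.IsPath ∧ Q.length = 2 * ys.length ∧
        (∀ v ∈ Q.support, v = b ∨ v ∈ ys ∨ v ∈ xs ∨ v = a) ∧
        (∀ e ∈ Q.edges, ∃ y ∈ ys, y ∈ Y ∧ y ∈ e) := by
  intro xs
  induction xs with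
  | nil =>
    intro ys b hlen _ hysnd hysY _ hbY _ _ hba hadj
    match ys, hlen with
    | [y], _ =>
      have hyY : y ∈ Y := hysY y (by simp)
      have hby : G.Adj b y := hadj b (Or.inr (Or.inl rfl)) y (by simp)
      have hay : G.Adj a y := hadj a (Or.inl rfl) y (by simp)
      refine ⟨.cons hby (.cons hay.symm .nil), ?_, by simp, ?_, ?_⟩
      · rw [SimpleGraph.Walk.isPath_def]
        simp only [SimpleGraph.Walk.support_cons, SimpleGraph.Walk.support_nil]
        refine List.nodup_cons.mpr ⟨?_, List.nodup_cons.mpr ⟨?_, List.nodup_singleton a⟩⟩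
        · simp only [List.mem_cons, List.mem_singleton]
          rintro (rfl | rfl | h)
          · exact hbY hyY
          · exact hba rfl
          · simp at h
        · simp only [List.mem_singleton]
          rintro rfl; exact haY hyY
      · intro v hv
        simp only [SimpleGraph.Walk.support_cons, SimpleGraph.Walk.support_nil,
          List.mem_cons, List.mem_singleton] at hv
        rcases hv with rfl | rfl | rfl | h
        · exact Or.inl rfl
        · exact Or.inr (Or.inl (by simp))
        · exact Or.inr (Or.inr (Or.inr rfl))
        · simp at h
      · intro e he
        simp only [SimpleGraph.Walk.edges_cons, SimpleGraph.Walk.edges_nil,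
          List.mem_cons, List.mem_singleton] at he
        rcases he with rfl | rfl | h
        · exact ⟨y, by simp, hyY, by simp⟩
        · exact ⟨y, by simp, hyY, by simp⟩
        · simp at h
  | cons x xs' ih =>
    intro ys b hlen hxsnd hysnd hysY hxsY hbY haxs hbxs hba hadj
    match ys, hlen with
    | y :: ys', hlen =>
      have hlen' : ys'.length = xs'.length + 1 := by simpa using hlen
      have hxX : x ∉ Y := hxsY x (by simp)
      have hyY : y ∈ Y := hysY y (by simp)
      have hxa : x ≠ a := fun h => haxs (h ▸ (by simp))
      obtain ⟨Q', hQ'path, hQ'len, hQ'sup, hQ'edges⟩ :=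
        ih ys' x hlen' (List.nodup_cons.mp hxsnd).2 (List.nodup_cons.mp hysnd).2
          (fun y' hy' => hysY y' (by simp [hy'])) (fun x' hx' => hxsY x' (by simp [hx']))
          hxX (fun h => haxs (by simp [h])) (List.nodup_cons.mp hxsnd).1 hxa
          (fun x' hx' y' hy' => hadj x'
            (by rcases hx' with h|h|h
                · exact Or.inl h
                · exact Or.inr (Or.inr (by simp [h]))
                · exact Or.inr (Or.inr (by simp [h])))
            y' (by simp [hy']))
      have hby : G.Adj b y := hadj b (Or.inr (Or.inl rfl)) y (by simp)
      have hxy : G.Adj x y := hadj x (Or.inr (Or.inr (by simp))) y (by simp)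
      have hynotsup : y ∉ Q'.support := by
        intro hy
        rcases hQ'sup y hy with rfl | h | h | rfl
        · exact hxX hyY
        · exact (List.nodup_cons.mp hysnd).1 h
        · exact hxsY y (by simp [h]) hyY
        · exact haY hyY
      have hbnotsup : b ∉ Q'.support := by
        intro hbsup
        rcases hQ'sup b hbsup with rfl | h | h | rfl
        · exact hbxs (by simp)
        · exact hbY (hysY b (by simp [h]))
        · exact hbxs (by simp [h])
        · exact hba rfl
      refine ⟨.cons hby (.cons hxy.symm Q'), ?_, ?_, ?_, ?_⟩
      · refine SimpleGraph.Walk.IsPath.cons (SimpleGraph.Walk.IsPath.cons hQ'path hynotsup) ?_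
        simp only [SimpleGraph.Walk.support_cons, List.mem_cons]
        rintro (rfl | h)
        · exact hbY hyY
        · exact hbnotsup h
      · simp only [SimpleGraph.Walk.length_cons, hQ'len, List.length_cons]
        ring
      · intro v hv
        simp only [SimpleGraph.Walk.support_cons, List.mem_cons] at hv
        rcases hv with rfl | rfl | hv
        · exact Or.inl rfl
        · exact Or.inr (Or.inl (by simp))
        · rcases hQ'sup v hv with rfl | h | h | rfl
          · exact Or.inr (Or.inr (Or.inl (by simp)))
          · exact Or.inr (Or.inl (by simp [h]))
          · exact Or.inr (Or.inr (Or.inl (by simp [h])))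
          · exact Or.inr (Or.inr (Or.inr rfl))
      · intro e he
        simp only [SimpleGraph.Walk.edges_cons, List.mem_cons] at he
        rcases he with rfl | rfl | he
        · exact ⟨y, by simp, hyY, by simp⟩
        · exact ⟨y, by simp, hyY, by simp⟩
        · obtain ⟨y', hy', hy'Y, hy'e⟩ := hQ'edges e he
          exact ⟨y', by simp [hy'], hy'Y, hy'e⟩

/-- If `G` has a partition `X ∪ Y ∪ Z` where `X` induces `K_{p-1}`, `Y` is an independent set
completely joined to `X` with `|Y| ≥ 2p`, and there is a path in `G[Z ∪ X]` with both ends in `X`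
meeting `X` in exactly `t ≥ 2` vertices and meeting `Z` in more than `t` vertices, then `G` has a
cycle of length at least `2p`. -/
theorem stmt_17 {V : Type*} [Fintype V] (G : SimpleGraph V) (p t : ℕ) (hp : 3 ≤ p) (ht : 2 ≤ t)
    (X Y Z : Set V) (hpart : X ∪ Y ∪ Z = Set.univ)
    (hXY : Disjoint X Y) (hXZ : Disjoint X Z) (hYZ : Disjoint Y Z)
    (hXcard : X.ncard = p - 1) (hXclique : G.IsClique X)
    (hYind : ∀ a ∈ Y, ∀ b ∈ Y, ¬ G.Adj a b)
    (hXYfull : ∀ x ∈ X, ∀ y ∈ Y, G.Adj x y)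
    (hYcard : 2 * p ≤ Y.ncard)
    {a b : V} (ha : a ∈ X) (hb : b ∈ X) (hab : a ≠ b)
    (P : G.Walk a b) (hP : P.IsPath)
    (hPZX : ∀ v ∈ P.support, v ∈ Z ∪ X)
    (hPX : ({v | v ∈ P.support} ∩ X).ncard = t)
    (hPZ : t < ({v | v ∈ P.support} ∩ Z).ncard) :
    ∃ (w : V) (c : G.Walk w w), c.IsCycle ∧ 2 * p ≤ c.length := by
  classical
  set S : Set V := {v | v ∈ P.support} with hS
  have hSfin : S.Finite := Set.toFinite _
  have hXfin : X.Finite := Set.toFinite _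
  have hYfin : Y.Finite := Set.toFinite _
  -- t ≤ p - 1
  have htp : t ≤ p - 1 := by
    rw [← hPX, ← hXcard]
    exact Set.ncard_le_ncard Set.inter_subset_right hXfin
  -- length of P's support
  have hsupnd : P.support.Nodup := hP.support_nodup
  have hSlen : S.ncard = P.support.length := by
    rw [hS, ← List.coe_toFinset, Set.ncard_coe_finset, List.toFinset_card_of_nodup hsupnd]
  have hSsplit : S = (S ∩ X) ∪ (S ∩ Z) := by
    ext v
    simp only [Set.mem_union, Set.mem_inter_iff]
    constructor
    · intro hv
      rcases hPZX v hv with h | h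
      · exact Or.inr ⟨hv, h⟩
      · exact Or.inl ⟨hv, h⟩
    · rintro (⟨h, _⟩ | ⟨h, _⟩) <;> exact h
  have hdisj : Disjoint (S ∩ X) (S ∩ Z) :=
    (hXZ.mono Set.inter_subset_right Set.inter_subset_right)
  have hScard : S.ncard = t + (S ∩ Z).ncard := by
    conv_lhs => rw [hSsplit]
    rw [Set.ncard_union_eq hdisj (hSfin.inter_of_left X) (hSfin.inter_of_left Z), hPX]
  have hPsuplen : 2 * t + 1 ≤ P.support.length := by
    rw [← hSlen, hScard]; omega
  have hPlen : 2 * t ≤ P.length := by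
    have := P.length_support
    omega
  -- choose fresh X-vertices
  have hXdiff : (X \ S).ncard = (p - 1) - t := by
    have h1 : X \ (X ∩ S) = X \ S := Set.diff_self_inter
    have h2 : (X \ (X ∩ S)).ncard = X.ncard - (X ∩ S).ncard :=
      Set.ncard_diff Set.inter_subset_left (hXfin.inter_of_left S)
    rw [h1] at h2
    rw [h2, hXcard, Set.inter_comm, hS, hPX]
  obtain ⟨S1, hS1sub, hS1card⟩ := Set.exists_subset_card_eq (s := X \ S) (n := p - t - 1) (by omega)
  obtain ⟨S2, hS2sub, hS2card⟩ := Set.exists_subset_card_eq (s := Y) (n := p - t) (by omega)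
  have hS1fin : S1.Finite := (hXfin.diff (t := S)).subset hS1sub
  have hS2fin : S2.Finite := hYfin.subset hS2sub
  set xs : List V := hS1fin.toFinset.toList with hxs
  set ys : List V := hS2fin.toFinset.toList with hys
  have hxslen : xs.length = p - t - 1 := by
    rw [hxs, Finset.length_toList, ← Set.ncard_eq_toFinset_card S1 hS1fin, hS1card]
  have hyslen : ys.length = p - t := by
    rw [hys, Finset.length_toList, ← Set.ncard_eq_toFinset_card S2 hS2fin, hS2card]
  have hxsmem : ∀ x ∈ xs, x ∈ X \ S := by
    intro x hx
    exact hS1sub (by rwa [hxs, Finset.mem_toList, Set.Finite.mem_toFinset] at hx)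
  have hysmem : ∀ y ∈ ys, y ∈ Y := by
    intro y hy
    exact hS2sub (by rwa [hys, Finset.mem_toList, Set.Finite.mem_toFinset] at hy)
  have haS : a ∈ S := P.start_mem_support
  have hbS : b ∈ S := P.end_mem_support
  obtain ⟨Q, hQpath, hQlen, hQsup, hQedges⟩ :=
    buildWalk_aux G Y a (fun h => hXY.ne_of_mem ha h rfl) xs ys b
      (by omega)
      (hS1fin.toFinset.nodup_toList) (hS2fin.toFinset.nodup_toList)
      hysmem
      (fun x hx => fun hxy => hXY.ne_of_mem (hxsmem x hx).1 hxy rfl)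
      (fun h => hXY.ne_of_mem hb h rfl)
      (fun h => (hxsmem a h).2 haS)
      (fun h => (hxsmem b h).2 hbS)
      hab.symm
      (by
        intro x hx y hy
        have hxX : x ∈ X := by
          rcases hx with rfl | rfl | hx
          · exact ha
          · exact hb
          · exact (hxsmem x hx).1
        exact hXYfull x hxX y (hysmem y hy))
  refine ⟨a, P.append Q, ?_, ?_⟩
  · -- IsCycle
    have hPtail : P.support.tail.Nodup := by
      have := hsupnd
      rw [P.support_eq_cons] at this
      exact (List.nodup_cons.mp this).2
    have hQnd : Q.support.Nodup := hQpath.support_nodup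
    have hQtail : Q.support.tail.Nodup := by
      have := hQnd
      rw [Q.support_eq_cons] at this
      exact (List.nodup_cons.mp this).2
    have hbnotQtail : b ∉ Q.support.tail := by
      have := hQnd
      rw [Q.support_eq_cons] at this
      exact (List.nodup_cons.mp this).1
    have hanotPtail : a ∉ P.support.tail := by
      have := hsupnd
      rw [P.support_eq_cons] at this
      exact (List.nodup_cons.mp this).1
    constructor
    constructor
    · -- IsTrail
      constructor
      rw [SimpleGraph.Walk.edges_append]
      refine List.Nodup.append hP.isTrail.edges_nodup hQpath.isTrail.edges_nodup ?_
      intro e heP heQ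
      obtain ⟨y, _, hyY, hye⟩ := hQedges e heQ
      obtain ⟨z, rfl⟩ := Sym2.mem_iff_exists.mp hye
      have hysup : y ∈ P.support := P.fst_mem_support_of_mem_edges heP
      rcases hPZX y hysup with h | h
      · exact hYZ.ne_of_mem hyY h rfl
      · exact hXY.ne_of_mem h hyY rfl
    · -- ne nil
      intro h
      have hl : (P.append Q).length = 0 := by rw [h]; rfl
      rw [SimpleGraph.Walk.length_append, hQlen, hyslen] at hl
      omega
    · -- support tail nodup
      rw [SimpleGraph.Walk.support_append, P.support_eq_cons]
      simp only [List.cons_append, List.tail_cons]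
      refine List.Nodup.append hPtail hQtail ?_
      intro v hvP hvQ
      have hvPsup : v ∈ P.support := by rw [P.support_eq_cons]; exact List.mem_cons_of_mem _ hvP
      have hvS : v ∈ S := hvPsup
      have hvb : v ≠ b := fun h => hbnotQtail (h ▸ hvQ)
      rcases hQsup v (List.mem_of_mem_tail hvQ) with rfl | h | h | rfl
      · exact hvb rfl
      · have hvY := hysmem v h
        rcases hPZX v hvPsup with hz | hx
        · exact hYZ.ne_of_mem hvY hz rfl
        · exact hXY.ne_of_mem hx hvY rfl
      · exact (hxsmem v h).2 hvS
      · exact hanotPtail hvP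
  · rw [SimpleGraph.Walk.length_append, hQlen, hyslen]
    omega
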